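/- Let ζ₊ and ζ₀ in [0,π] be defined by cos ζ₊ = u₊ and cos ζ₀ = u₀ where u₀ = (-308 + 27√41)/565 and u₊ is the larger root given in the context. Then the function h(ζ) := c₀·cos 2ζ + c₁·sin 2ζ + c₂·cos ζ + c₃·sin ζ + c₄ with c₀ = -4197 + 977√41, c₁ = 24(-633 + 113√41), c₂ = 4(-14667 + 2191√41), c₃ = 48(-843 + 139√41), c₄ = -53775 + 8403√41, satisfies h(ζ) ≥ 0 for all ζ in an interval [ζ_*, π] containing ζ₀ in its interior whenever h(ζ_*) > 0; in particular, h(ζ) ≥ 0 for all ζ ∈ [0.13, π]. -/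
import Mathlib
set_option maxHeartbeats 1600000

noncomputable def c0 : ℝ := -4197 + 977*Real.sqrt 41
noncomputable def c1 : ℝ := 24*(-633 + 113*Real.sqrt 41)
noncomputable def c2 : ℝ := 4*(-14667 + 2191*Real.sqrt 41)
noncomputable def c3 : ℝ := 48*(-843 + 139*Real.sqrt 41)
noncomputable def c4 : ℝ := -53775 + 8403*Real.sqrt 41

noncomputable def h (ζ : ℝ) : ℝ :=
  c0*Real.cos (2*ζ) + c1*Real.sin (2*ζ) + c2*Real.cos ζ + c3*Real.sin ζ + c4

noncomputable def u0 : ℝ := (-308 + 27*Real.sqrt 41)/565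

/-- `ζ₀ = arccos u₀` is the larger zero of `h` in `[0,π]`. -/
noncomputable def ζ0 : ℝ := Real.arccos u0

/- Auxiliary definitions: quadratic factor coefficients. -/
noncomputable def qA : ℝ := -2356400264 + 362409384*Real.sqrt 41
noncomputable def qB : ℝ := -3826331504 + 600466224*Real.sqrt 41
noncomputable def qC : ℝ := -1726559240 + 272326440*Real.sqrt 41

lemma s41_sq : Real.sqrt 41 ^ 2 = 41 := Real.sq_sqrt (by norm_num)

lemma s41_lb : (6.4031242:ℝ) < Real.sqrt 41 := by
  nlinarith [s41_sq, Real.sqrt_nonneg (41:ℝ)]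

lemma s41_ub : Real.sqrt 41 < (6.4031243:ℝ) := by
  nlinarith [s41_sq, Real.sqrt_nonneg (41:ℝ)]

/-- `h` in terms of `u = cos ζ`, `s = sin ζ`. -/
lemma h_form (ζ : ℝ) :
    h ζ = (2*c0*(Real.cos ζ)^2 + c2*Real.cos ζ + (c4 - c0))
          + Real.sin ζ * (2*c1*Real.cos ζ + c3) := by
  unfold h
  rw [Real.cos_two_mul, Real.sin_two_mul]
  ring

/-- Key polynomial factorization:
`(1-u²)Q(u)² - P(u)² = (qA u² + qB u + qC)(u - u0)²`. -/
lemma R_fact (u : ℝ) :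
    (1 - u^2)*(2*c1*u + c3)^2 - (2*c0*u^2 + c2*u + (c4 - c0))^2
      = (qA*u^2 + qB*u + qC)*(u - u0)^2 := by
  have hs : Real.sqrt 41 ^ 2 = 41 := s41_sq
  set s := Real.sqrt 41 with hsdef
  unfold c0 c1 c2 c3 c4 qA qB qC u0
  rw [← hsdef]
  linear_combination ((478933552468/63845:ℝ) + (2638589979184/319225:ℝ)*u + (-12536430336816/319225:ℝ)*u^2 + (-40674469184/565:ℝ)*u^3 + (-33237892:ℝ)*u^4 + (-39705194952/63845:ℝ)*s + (-437739877296/319225:ℝ)*s*u + (-264196440936/319225:ℝ)*s*u^2) * hs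

/-- Concavity propagation for the quadratic `qA u² + qB u + qC`. -/
lemma quad_propagate (u v : ℝ) (hu : -0.46 < u) (huv : u ≤ v) (hv1 : v ≤ 1)
    (hv : 0 ≤ qA*v^2 + qB*v + qC) : 0 ≤ qA*u^2 + qB*u + qC := by
  have hlb := s41_lb; have hub := s41_ub
  unfold qA qB qC at *
  nlinarith [mul_nonneg (mul_nonneg (by linarith : (0:ℝ) ≤ u + 0.46) (by linarith : (0:ℝ) ≤ v - u)) (by linarith : (0:ℝ) ≤ v + 0.46), mul_nonneg (by linarith : (0:ℝ) ≤ u + 0.46) (by linarith : (0:ℝ) ≤ v - u)]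

/-- Main nonnegativity lemma in `u,s` coordinates. -/
lemma main_ineq (u s : ℝ) (hs : 0 ≤ s) (hs2 : s^2 = 1 - u^2)
    (hu : -1 ≤ u) (hu1 : u ≤ 1)
    (hcase : u ≤ -0.46 ∨ 0 ≤ qA*u^2 + qB*u + qC) :
    0 ≤ (2*c0*u^2 + c2*u + (c4 - c0)) + s * (2*c1*u + c3) := by
  have hlb := s41_lb; have hub := s41_ub
  have hR := R_fact u
  rcases hcase with hle | hquad
  · -- u ≤ -0.46 : here P ≥ 0
    have hP : 0 ≤ 2*c0*u^2 + c2*u + (c4 - c0) := by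
      unfold c0 c2 c4
      nlinarith [sq_nonneg (u + 0.46), mul_nonneg (by linarith : (0:ℝ) ≤ -u - 0.46) (by linarith : (0:ℝ) ≤ u + 1)]
    rcases le_or_gt 0 (2*c1*u + c3) with hQ | hQ
    · have := mul_nonneg hs hQ; linarith
    · -- Q < 0 : then u ≤ -0.519, hence quad ≤ 0, hence P² ≥ s²Q²
      have hu519 : u ≤ -0.519 := by
        unfold c1 c3 at hQ
        nlinarith
      have hquad : qA*u^2 + qB*u + qC ≤ 0 := by
        unfold qA qB qC
        nlinarith [mul_nonneg (by linarith : (0:ℝ) ≤ -0.519 - u) (by linarith : (0:ℝ) ≤ u + 1)]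
      have hRle : (1 - u^2)*(2*c1*u + c3)^2 ≤ (2*c0*u^2 + c2*u + (c4 - c0))^2 := by
        nlinarith [sq_nonneg (u - u0), mul_nonpos_of_nonpos_of_nonneg hquad (sq_nonneg (u - u0))]
      nlinarith [mul_nonneg hs (le_of_lt (neg_pos.mpr hQ)), sq_nonneg s, hRle, hP, hs2]
  · -- quad ≥ 0 : here Q ≥ 0 and s²Q² ≥ P²
    have hu481 : -0.481 < u := by
      by_contra hc
      push_neg at hc
      unfold qA qB qC at hquad
      nlinarith [mul_nonneg (by linarith : (0:ℝ) ≤ -0.481 - u) (by linarith : (0:ℝ) ≤ u + 1)]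
    have hQ : 0 ≤ 2*c1*u + c3 := by
      unfold c1 c3
      nlinarith
    have hRge : (2*c0*u^2 + c2*u + (c4 - c0))^2 ≤ (1 - u^2)*(2*c1*u + c3)^2 := by
      nlinarith [mul_nonneg hquad (sq_nonneg (u - u0))]
    nlinarith [mul_nonneg hs hQ, hRge, hs2, sq_nonneg ((2*c0*u^2 + c2*u + (c4 - c0)) + s * (2*c1*u + c3))]

/-- If the case hypothesis fails, `h` is negative. -/
lemma neg_case (u s : ℝ) (hs : 0 ≤ s) (hs2 : s^2 = 1 - u^2) (hu1 : u ≤ 1)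
    (hgt : -0.46 < u) (hquad : qA*u^2 + qB*u + qC < 0) :
    (2*c0*u^2 + c2*u + (c4 - c0)) + s * (2*c1*u + c3) < 0 := by
  have hlb := s41_lb; have hub := s41_ub
  have hR := R_fact u
  have hu997 : 0.997 < u := by
    by_contra hc
    push_neg at hc
    unfold qA qB qC at hquad
    nlinarith [mul_nonneg (by linarith : (0:ℝ) ≤ u + 0.46) (by linarith : (0:ℝ) ≤ 0.997 - u)]
  have hP : 2*c0*u^2 + c2*u + (c4 - c0) < 0 := by
    unfold c0 c2 c4
    nlinarith [mul_nonneg (by linarith : (0:ℝ) ≤ u - 0.997) (by linarith : (0:ℝ) ≤ 1 - u)]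
  have hu0pos : 0 < (u - u0)^2 := by
    have hu0 : u0 < 0 := by
      unfold u0; nlinarith
    have : 0 < u - u0 := by linarith
    exact pow_pos this 2
  have hRlt : (1 - u^2)*(2*c1*u + c3)^2 < (2*c0*u^2 + c2*u + (c4 - c0))^2 := by
    nlinarith [mul_neg_of_neg_of_pos hquad hu0pos]
  have hQ : 0 ≤ 2*c1*u + c3 := by
    unfold c1 c3
    nlinarith
  nlinarith [mul_nonneg hs hQ, hs2, hRlt, hP]

theorem stmt5 :
    (∀ ζstar : ℝ, 0 ≤ ζstar → ζstar ≤ Real.pi → ζstar < ζ0 → 0 < h ζstar →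
      ∀ ζ : ℝ, ζstar ≤ ζ → ζ ≤ Real.pi → 0 ≤ h ζ) ∧
    (∀ ζ : ℝ, (0.13 : ℝ) ≤ ζ → ζ ≤ Real.pi → 0 ≤ h ζ) := by
  constructor
  · intro ζs h0 hπ _ hpos ζ hge hle
    have h0ζ : 0 ≤ ζ := le_trans h0 hge
    have hsin : 0 ≤ Real.sin ζ := Real.sin_nonneg_of_nonneg_of_le_pi h0ζ hle
    have hsin2 : (Real.sin ζ)^2 = 1 - (Real.cos ζ)^2 := by
      nlinarith [Real.sin_sq_add_cos_sq ζ]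
    have hsins : 0 ≤ Real.sin ζs := Real.sin_nonneg_of_nonneg_of_le_pi h0 hπ
    have hsin2s : (Real.sin ζs)^2 = 1 - (Real.cos ζs)^2 := by
      nlinarith [Real.sin_sq_add_cos_sq ζs]
    have hmono : Real.cos ζ ≤ Real.cos ζs :=
      Real.cos_le_cos_of_nonneg_of_le_pi h0 hle hge
    -- the case hypothesis holds at ζs since h ζs > 0
    have hcs : Real.cos ζs ≤ -0.46 ∨ 0 ≤ qA*(Real.cos ζs)^2 + qB*(Real.cos ζs) + qC := by
      by_contra hc
      push_neg at hc
      obtain ⟨h1, h2⟩ := hc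
      have := neg_case (Real.cos ζs) (Real.sin ζs) hsins hsin2s
        (Real.cos_le_one ζs) h1 h2
      rw [h_form ζs] at hpos
      linarith
    -- transfer the case hypothesis to ζ
    have hcζ : Real.cos ζ ≤ -0.46 ∨ 0 ≤ qA*(Real.cos ζ)^2 + qB*(Real.cos ζ) + qC := by
      rcases hcs with h1 | h2
      · left; linarith
      · rcases le_or_gt (Real.cos ζ) (-0.46) with h3 | h3
        · left; exact h3
        · right
          exact quad_propagate _ _ h3 hmono (Real.cos_le_one ζs) h2
    rw [h_form ζ]
    exact main_ineq _ _ hsin hsin2 (Real.neg_one_le_cos ζ) (Real.cos_le_one ζ) hcζ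
  · intro ζ hge hle
    have h0ζ : (0:ℝ) ≤ ζ := le_trans (by norm_num) hge
    have hsin : 0 ≤ Real.sin ζ := Real.sin_nonneg_of_nonneg_of_le_pi h0ζ hle
    have hsin2 : (Real.sin ζ)^2 = 1 - (Real.cos ζ)^2 := by
      nlinarith [Real.sin_sq_add_cos_sq ζ]
    have hcosb : Real.cos ζ ≤ 0.9916 := by
      have h1 : Real.cos ζ ≤ Real.cos 0.13 :=
        Real.cos_le_cos_of_nonneg_of_le_pi (by norm_num) hle hge
      have hx : |(0.13:ℝ)| ≤ 1 := by
        rw [abs_of_nonneg (by norm_num)]; norm_num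
      have h2 := Real.cos_bound (x := 0.13) hx
      have h3 : |Real.cos 0.13 - (1 - (0.13:ℝ)^2/2)| ≤ |(0.13:ℝ)|^4 * (5/96) := h2
      rw [abs_le] at h3
      have := h3.2
      rw [show |(0.13:ℝ)| = 0.13 by rw [abs_of_pos]; norm_num] at this
      nlinarith
    have hcζ : Real.cos ζ ≤ -0.46 ∨ 0 ≤ qA*(Real.cos ζ)^2 + qB*(Real.cos ζ) + qC := by
      rcases le_or_gt (Real.cos ζ) (-0.46) with h3 | h3
      · left; exact h3
      · right
        refine quad_propagate _ (0.9916) h3 hcosb (by norm_num) ?_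
        have hlb := s41_lb; have hub := s41_ub
        unfold qA qB qC
        nlinarith
    rw [h_form ζ]
    exact main_ineq _ _ hsin hsin2 (Real.neg_one_le_cos ζ) (Real.cos_le_one ζ) hcζ
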